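/- Let g(T) ∈ Q[T] be an irreducible polynomial of degree 4 with Galois group S₄ acting on its 4 roots, let N be its splitting field, and let M ⊆ N be the fixed field of the subgroup H = ⟨(1 2), (3 4)⟩ of S₄ (so [M : Q] = 6). Then g(T) factors over M as a product of two irreducible quadratics, and neither quadratic factor h satisfies deg g = [L : Q] · deg h where L is the field generated by the coefficients of h; indeed, the coefficients of each factor generate M itself. -/

import Mathlib

open Polynomial IntermediateField

section helpers
variable {N : Type*} [Field N] [Algebra ℚ N]

/-- If an automorphism fixes the sum and product of `a` and `b`, it permutes `{a, b}`. -/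
private lemma fix_pair (σ : N ≃ₐ[ℚ] N) (a b : N)
    (hs : σ (a + b) = a + b) (hp : σ (a * b) = a * b) :
    (σ a = a ∧ σ b = b) ∨ (σ a = b ∧ σ b = a) := by
  have key : (σ a - a) * (σ a - b) = 0 := by
    have : σ a * σ a - σ a * σ (a + b) + σ (a * b) = σ (a * a - a * (a + b) + a * b) := by
      simp [map_add, map_sub, map_mul]
    rw [hs, hp] at this
    have h0 : σ (a * a - a * (a + b) + a * b) = 0 := by
      rw [show a * a - a * (a + b) + a * b = 0 by ring, map_zero]
    linear_combination this + h0
  rcases mul_eq_zero.mp key with h | h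
  · left
    have ha : σ a = a := sub_eq_zero.mp h
    refine ⟨ha, ?_⟩
    have h2 := hs
    rw [map_add, ha] at h2
    linear_combination h2
  · right
    have ha : σ a = b := sub_eq_zero.mp h
    refine ⟨ha, ?_⟩
    have h2 := hs
    rw [map_add, ha] at h2
    linear_combination h2

end helpers


private def S4fs : Finset (Equiv.Perm (Fin 4)) :=
  {1, Equiv.swap 0 1, Equiv.swap 2 3, Equiv.swap 0 1 * Equiv.swap 2 3}

private def Kexp : Subgroup (Equiv.Perm (Fin 4)) where
  carrier := ↑S4fs
  one_mem' := by decide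
  mul_mem' := by decide
  inv_mem' := by decide

private lemma mem_Kexp_iff (x : Equiv.Perm (Fin 4)) : x ∈ Kexp ↔ x ∈ S4fs := Iff.rfl

private instance : DecidablePred (· ∈ Kexp) := fun x => decidable_of_iff _ (mem_Kexp_iff x).symm

private lemma closure_eq_Kexp :
    Subgroup.closure {Equiv.swap (0 : Fin 4) 1, Equiv.swap (2 : Fin 4) 3} = Kexp := by
  apply le_antisymm
  · rw [Subgroup.closure_le]
    intro x hx
    rcases hx with h | h <;> subst h <;> rw [SetLike.mem_coe, mem_Kexp_iff] <;> decide
  · intro x hx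
    rw [mem_Kexp_iff] at hx
    fin_cases hx
    · exact one_mem _
    · exact Subgroup.subset_closure (by left; rfl)
    · exact Subgroup.subset_closure (by right; rfl)
    · exact mul_mem (Subgroup.subset_closure (by left; rfl))
        (Subgroup.subset_closure (by right; rfl))

private lemma card_Kexp : Nat.card Kexp = 4 := by
  rw [Nat.card_eq_fintype_card]
  decide

private lemma Kexp_pairs : ∀ π ∈ S4fs,
    ((π 0 = 0 ∧ π 1 = 1) ∨ (π 0 = 1 ∧ π 1 = 0)) ∧
    ((π 2 = 2 ∧ π 3 = 3) ∨ (π 2 = 3 ∧ π 3 = 2)) := by decide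

private lemma perm_mem_Kexp (a b : Fin 4) (hab : a ≠ b)
    (h1 : (Equiv.swap (0:Fin 4) 1 a = a ∨ Equiv.swap (0:Fin 4) 1 a = b) ∧
          (Equiv.swap (0:Fin 4) 1 b = a ∨ Equiv.swap (0:Fin 4) 1 b = b))
    (h2 : (Equiv.swap (2:Fin 4) 3 a = a ∨ Equiv.swap (2:Fin 4) 3 a = b) ∧
          (Equiv.swap (2:Fin 4) 3 b = a ∨ Equiv.swap (2:Fin 4) 3 b = b))
    (π : Equiv.Perm (Fin 4))
    (hπ : (π a = a ∨ π a = b) ∧ (π b = a ∨ π b = b)) :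
    π ∈ S4fs := by
  revert hab h1 h2 hπ
  revert a b π
  decide


set_option synthInstance.maxHeartbeats 400000

theorem s4_example_no_irreducible_normic_factor
    (g : Polynomial ℚ) (hmonic : g.Monic) (hirr : Irreducible g) (hdeg : g.natDegree = 4)
    (N : Type*) [Field N] [Algebra ℚ N] [IsSplittingField ℚ N g] [FiniteDimensional ℚ N]
    (e : (N ≃ₐ[ℚ] N) ≃* Equiv.Perm (Fin 4))
    (r : Fin 4 → N) (hroot : ∀ i, Polynomial.aeval (r i) g = 0)
    (hinj : Function.Injective r)
    (hcompat : ∀ (σ : N ≃ₐ[ℚ] N) (i : Fin 4), σ (r i) = r (e σ i)) :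
    ∀ M : IntermediateField ℚ N,
      M = IntermediateField.fixedField
        (Subgroup.comap e.toMonoidHom
          (Subgroup.closure {Equiv.swap (0 : Fin 4) 1, Equiv.swap (2 : Fin 4) 3})) →
      (Module.finrank ℚ M = 6) ∧
      (∃ h₁ h₂ : Polynomial M, h₁.Monic ∧ h₂.Monic ∧ Irreducible h₁ ∧ Irreducible h₂ ∧
        h₁.natDegree = 2 ∧ h₂.natDegree = 2 ∧
        g.map (algebraMap ℚ M) = h₁ * h₂) ∧
      (∀ h : Polynomial M, h.Monic → h ∣ g.map (algebraMap ℚ M) → h.natDegree = 2 →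
        IntermediateField.adjoin ℚ (Set.range h.coeff) = (⊤ : IntermediateField ℚ M) ∧
        g.natDegree ≠
          Module.finrank ℚ (IntermediateField.adjoin ℚ (Set.range h.coeff)) *
            h.natDegree) := by
  intro M hM
  haveI : IsGalois ℚ N := IsGalois.of_separable_splitting_field hirr.separable
  set H' : Subgroup (N ≃ₐ[ℚ] N) := Subgroup.comap e.toMonoidHom
      (Subgroup.closure {Equiv.swap (0 : Fin 4) 1, Equiv.swap (2 : Fin 4) 3}) with hH'
  -- membership criterion for H'
  have memH' : ∀ σ : N ≃ₐ[ℚ] N, σ ∈ H' ↔ e σ ∈ S4fs := by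
    intro σ
    rw [hH', Subgroup.mem_comap, closure_eq_Kexp]
    exact Iff.rfl
  -- elements of M are fixed by H'
  have hfix : ∀ x : N, x ∈ M → ∀ σ : N ≃ₐ[ℚ] N, σ ∈ H' → σ x = x := by
    intro x hx σ hσ
    rw [hM] at hx
    exact hx ⟨σ, hσ⟩
  -- membership in M from being fixed
  have hmem : ∀ x : N, (∀ σ : N ≃ₐ[ℚ] N, σ ∈ H' → σ x = x) → x ∈ M := by
    intro x hx
    rw [hM]
    intro σ
    exact hx σ.1 σ.2
  -- the element e.symm (swap 0 1) and e.symm (swap 2 3) are in H'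
  have hσ01 : e.symm (Equiv.swap 0 1) ∈ H' := by
    rw [memH', MulEquiv.apply_symm_apply]; decide
  have hσ23 : e.symm (Equiv.swap 2 3) ∈ H' := by
    rw [memH', MulEquiv.apply_symm_apply]; decide
  -- roots are pairwise distinct and not in M
  have hrM : ∀ i : Fin 4, r i ∉ M := by
    intro i hi
    have h01 := hfix _ hi _ hσ01
    have h23 := hfix _ hi _ hσ23
    rw [hcompat, MulEquiv.apply_symm_apply] at h01 h23
    have h01' := hinj h01
    have h23' := hinj h23
    revert h01' h23'
    fin_cases i <;> decide
  -- g maps to the product of linear factors over N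
  have gN0 : g.map (algebraMap ℚ N) ≠ 0 := (hmonic.map _).ne_zero
  have hsplit : Splits (g.map (algebraMap ℚ N)) := by
    exact IsSplittingField.splits N g
  have hrootsN : (g.map (algebraMap ℚ N)).roots = Finset.univ.val.map r := by
    have hnd : (Finset.univ.val.map r).Nodup := Multiset.Nodup.map hinj Finset.univ.nodup
    have hle : Finset.univ.val.map r ≤ (g.map (algebraMap ℚ N)).roots := by
      rw [Multiset.le_iff_subset hnd]
      intro x hx
      obtain ⟨i, _, rfl⟩ := Multiset.mem_map.mp hx
      rw [mem_roots gN0, IsRoot.def, eval_map, ← aeval_def]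
      exact hroot i
    have hcard : Multiset.card (g.map (algebraMap ℚ N)).roots = 4 := by
      rw [splits_iff_card_roots.mp hsplit, natDegree_map, hdeg]
    refine (Multiset.eq_of_le_of_card_le hle ?_).symm
    rw [hcard]
    simp
  have hprodN : g.map (algebraMap ℚ N) = ∏ i : Fin 4, (X - C (r i)) := by
    conv_lhs => rw [hsplit.eq_prod_roots_of_monic (hmonic.map _)]
    rw [hrootsN, Multiset.map_map]
    rfl
  -- rank computations
  have hrankN : Module.finrank ℚ N = 24 := by
    rw [← IsGalois.card_aut_eq_finrank ℚ N, Nat.card_congr e.toEquiv, Nat.card_eq_fintype_card,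
      Fintype.card_perm, Fintype.card_fin]
    decide
  haveI : DecidablePred (· ∈ H') := fun σ => decidable_of_iff _ (memH' σ).symm
  have hcardH' : Nat.card H' = 4 := by
    rw [hH', closure_eq_Kexp, Subgroup.comap_equiv_eq_map_symm']
    rw [Nat.card_congr (Kexp.equivMapOfInjective _ e.symm.injective).toEquiv.symm]
    exact card_Kexp
  have hrankMN : Module.finrank M N = 4 := by
    rw [hM, IntermediateField.finrank_fixedField_eq_card]
    exact hcardH'
  have hrankM : Module.finrank ℚ M = 6 := by
    have := Module.finrank_mul_finrank ℚ M N
    rw [hrankMN, hrankN] at this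
    omega
  -- sums and products of paired roots are in M
  have hpairfix : ∀ σ : N ≃ₐ[ℚ] N, σ ∈ H' →
      (σ (r 0 + r 1) = r 0 + r 1 ∧ σ (r 0 * r 1) = r 0 * r 1) ∧
      (σ (r 2 + r 3) = r 2 + r 3 ∧ σ (r 2 * r 3) = r 2 * r 3) := by
    intro σ hσ
    rw [memH'] at hσ
    obtain ⟨hp1, hp2⟩ := Kexp_pairs _ hσ
    refine ⟨⟨?_, ?_⟩, ?_, ?_⟩
    · rw [map_add, hcompat, hcompat]
      rcases hp1 with ⟨ha, hb⟩ | ⟨ha, hb⟩ <;> rw [ha, hb] <;> ring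
    · rw [map_mul, hcompat, hcompat]
      rcases hp1 with ⟨ha, hb⟩ | ⟨ha, hb⟩ <;> rw [ha, hb] <;> ring
    · rw [map_add, hcompat, hcompat]
      rcases hp2 with ⟨ha, hb⟩ | ⟨ha, hb⟩ <;> rw [ha, hb] <;> ring
    · rw [map_mul, hcompat, hcompat]
      rcases hp2 with ⟨ha, hb⟩ | ⟨ha, hb⟩ <;> rw [ha, hb] <;> ring
  -- coefficients of the two quadratics lie in M
  have ha1 : r 0 + r 1 ∈ M := hmem _ fun σ hσ => ((hpairfix σ hσ).1).1
  have hb1 : r 0 * r 1 ∈ M := hmem _ fun σ hσ => ((hpairfix σ hσ).1).2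
  have ha2 : r 2 + r 3 ∈ M := hmem _ fun σ hσ => ((hpairfix σ hσ).2).1
  have hb2 : r 2 * r 3 ∈ M := hmem _ fun σ hσ => ((hpairfix σ hσ).2).2
  set q₁ : Polynomial M := X ^ 2 - C ⟨r 0 + r 1, ha1⟩ * X + C ⟨r 0 * r 1, hb1⟩ with hq₁
  set q₂ : Polynomial M := X ^ 2 - C ⟨r 2 + r 3, ha2⟩ * X + C ⟨r 2 * r 3, hb2⟩ with hq₂
  have hφ : ∀ x : M, algebraMap M N x = (x : N) := fun x => rfl
  have hq₁N : q₁.map (algebraMap M N) = (X - C (r 0)) * (X - C (r 1)) := by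
    rw [hq₁]
    simp only [Polynomial.map_add, Polynomial.map_sub, Polynomial.map_mul, Polynomial.map_pow,
      map_C, map_X, hφ]
    rw [C_add, C_mul]
    ring
  have hq₂N : q₂.map (algebraMap M N) = (X - C (r 2)) * (X - C (r 3)) := by
    rw [hq₂]
    simp only [Polynomial.map_add, Polynomial.map_sub, Polynomial.map_mul, Polynomial.map_pow,
      map_C, map_X, hφ]
    rw [C_add, C_mul]
    ring
  have hq₁monic : q₁.Monic := by rw [hq₁]; monicity!
  have hq₂monic : q₂.Monic := by rw [hq₂]; monicity!
  have hd₁ : q₁.natDegree = 2 := by rw [hq₁]; compute_degree!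
  have hd₂ : q₂.natDegree = 2 := by rw [hq₂]; compute_degree!
  -- a monic quadratic dividing g over M has no roots in M
  have noroot : ∀ q : Polynomial M, q.Monic → q.natDegree = 2 →
      (∀ x : M, eval x q = 0 → False) → Irreducible q := by
    intro q hqm hq2 hnr
    rw [hqm.irreducible_iff_roots_eq_zero_of_degree_le_three (by omega) (by omega)]
    rw [Multiset.eq_zero_iff_forall_notMem]
    intro x hx
    rw [mem_roots', IsRoot.def] at hx
    exact hnr x hx.2
  have hq₁irr : Irreducible q₁ := by
    apply noroot _ hq₁monic hd₁
    intro x hx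
    have h0 : eval (algebraMap M N x) (q₁.map (algebraMap M N)) = 0 := by
      rw [eval_map, eval₂_hom, hx, map_zero]
    rw [hq₁N, eval_mul, eval_sub, eval_sub, eval_X, eval_C, eval_C] at h0
    rcases mul_eq_zero.mp h0 with h | h
    · exact hrM 0 ((sub_eq_zero.mp h) ▸ x.2)
    · exact hrM 1 ((sub_eq_zero.mp h) ▸ x.2)
  have hq₂irr : Irreducible q₂ := by
    apply noroot _ hq₂monic hd₂
    intro x hx
    have h0 : eval (algebraMap M N x) (q₂.map (algebraMap M N)) = 0 := by
      rw [eval_map, eval₂_hom, hx, map_zero]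
    rw [hq₂N, eval_mul, eval_sub, eval_sub, eval_X, eval_C, eval_C] at h0
    rcases mul_eq_zero.mp h0 with h | h
    · exact hrM 2 ((sub_eq_zero.mp h) ▸ x.2)
    · exact hrM 3 ((sub_eq_zero.mp h) ▸ x.2)
  have hfact : g.map (algebraMap ℚ M) = q₁ * q₂ := by
    apply Polynomial.map_injective (algebraMap M N) (algebraMap M N).injective
    rw [Polynomial.map_map, ← IsScalarTower.algebraMap_eq, Polynomial.map_mul, hq₁N, hq₂N,
      hprodN, Fin.prod_univ_four]
    ring
  refine ⟨hrankM, ⟨q₁, q₂, hq₁monic, hq₂monic, hq₁irr, hq₂irr, hd₁, hd₂, hfact⟩, ?_⟩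
  -- part 3
  intro h hhm hhdvd hhdeg
  set h' : Polynomial N := h.map (algebraMap M N) with hh'
  have hh'dvd : h' ∣ g.map (algebraMap ℚ N) := by
    have := Polynomial.map_dvd (algebraMap M N) hhdvd
    rwa [Polynomial.map_map, ← IsScalarTower.algebraMap_eq] at this
  have hh'm : h'.Monic := hhm.map _
  have hh'deg : h'.natDegree = 2 := by rw [hh', natDegree_map, hhdeg]
  have hh'splits : Splits h' :=
    hsplit.of_dvd gN0 hh'dvd
  have hrootsle : h'.roots ≤ Multiset.map r Finset.univ.val := by
    rw [← hrootsN]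
    exact roots.le_of_dvd gN0 hh'dvd
  have hnd : (Multiset.map r Finset.univ.val).Nodup := Multiset.Nodup.map hinj Finset.univ.nodup
  have hcard2 : Multiset.card h'.roots = 2 := by
    rw [splits_iff_card_roots.mp hh'splits, hh'deg]
  obtain ⟨x, y, hxy⟩ := Multiset.card_eq_two.mp hcard2
  have hxmem : x ∈ Multiset.map r Finset.univ.val :=
    Multiset.mem_of_le hrootsle (by rw [hxy]; simp)
  have hymem : y ∈ Multiset.map r Finset.univ.val :=
    Multiset.mem_of_le hrootsle (by rw [hxy]; simp)
  obtain ⟨a, -, rfl⟩ := Multiset.mem_map.mp hxmem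
  obtain ⟨b, -, rfl⟩ := Multiset.mem_map.mp hymem
  have hab : a ≠ b := by
    intro hab
    subst hab
    have := Multiset.nodup_of_le hrootsle hnd
    rw [hxy] at this
    simp at this
  have hfacth' : h' = (X - C (r a)) * (X - C (r b)) := by
    conv_lhs => rw [hh'splits.eq_prod_roots_of_monic hh'm]
    rw [hxy]
    simp [Multiset.prod_cons]
  have hexp : (X - C (r a)) * (X - C (r b)) = X ^ 2 - C (r a + r b) * X + C (r a * r b) := by
    rw [C_add, C_mul]
    ring
  have hc0 : h'.coeff 0 = r a * r b := by
    rw [hfacth', hexp]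
    simp [coeff_X_pow]
  have hc1 : h'.coeff 1 = -(r a + r b) := by
    rw [hfacth', hexp]
    simp [coeff_X_pow]
  -- anything fixing the coefficients of h' permutes {a, b}
  have key : ∀ σ : N ≃ₐ[ℚ] N, σ (h'.coeff 0) = h'.coeff 0 → σ (h'.coeff 1) = h'.coeff 1 →
      (e σ a = a ∨ e σ a = b) ∧ (e σ b = a ∨ e σ b = b) := by
    intro σ k0 k1
    rw [hc0] at k0
    rw [hc1, map_neg, neg_inj] at k1
    rcases fix_pair σ _ _ k1 k0 with ⟨u, v⟩ | ⟨u, v⟩ <;> rw [hcompat] at u v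
    · exact ⟨Or.inl (hinj u), Or.inr (hinj v)⟩
    · exact ⟨Or.inr (hinj u), Or.inl (hinj v)⟩
  have hcoeffM : ∀ n, h'.coeff n ∈ M := by
    intro n
    rw [hh', coeff_map, hφ]
    exact (h.coeff n).2
  have hswap01 := key _ (hfix _ (hcoeffM 0) _ hσ01) (hfix _ (hcoeffM 1) _ hσ01)
  have hswap23 := key _ (hfix _ (hcoeffM 0) _ hσ23) (hfix _ (hcoeffM 1) _ hσ23)
  rw [MulEquiv.apply_symm_apply] at hswap01 hswap23
  set L₂ : IntermediateField ℚ N := adjoin ℚ (Set.range h'.coeff) with hL₂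
  have hcoeffL₂ : ∀ n, h'.coeff n ∈ L₂ := fun n => subset_adjoin _ _ ⟨n, rfl⟩
  have hL₂M : L₂ ≤ M := by
    rw [hL₂, adjoin_le_iff]
    rintro _ ⟨n, rfl⟩
    exact hcoeffM n
  have hfixing : L₂.fixingSubgroup ≤ H' := by
    intro σ hσ
    rw [IntermediateField.mem_fixingSubgroup_iff] at hσ
    have hk := key σ (hσ _ (hcoeffL₂ 0)) (hσ _ (hcoeffL₂ 1))
    rw [memH']
    exact perm_mem_Kexp a b hab hswap01 hswap23 _ hk
  have hML₂ : M ≤ L₂ := by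
    conv_rhs => rw [← IsGalois.fixedField_fixingSubgroup L₂]
    rw [hM]
    intro z hz σ
    exact hz ⟨σ.1, hfixing σ.2⟩
  have hL₂eq : L₂ = M := le_antisymm hL₂M hML₂
  have hadj : adjoin ℚ (Set.range h.coeff) = (⊤ : IntermediateField ℚ M) := by
    set v : M →ₐ[ℚ] N := RingHom.toRatAlgHom (M.val : M →+* N) with hv
    have hcoeval : h'.coeff = ⇑v ∘ h.coeff := by
      funext n
      rw [hh', coeff_map]
      rfl
    have himg : ⇑v '' Set.range h.coeff = Set.range h'.coeff := by
      rw [← Set.range_comp, hcoeval]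
    apply IntermediateField.map_injective v
    rw [adjoin_map, himg, ← hL₂, hL₂eq, ← AlgHom.fieldRange_eq_map]
    ext z
    rw [AlgHom.mem_fieldRange]
    exact ⟨fun hz => ⟨⟨z, hz⟩, rfl⟩, fun ⟨y, hy⟩ => hy ▸ y.2⟩
  refine ⟨hadj, ?_⟩
  rw [hadj, hdeg, hhdeg]
  have htopM : ((⊤ : IntermediateField ℚ M) : Type _) ≃ₗ[ℚ] M :=
    { toFun := fun x => x.1
      map_add' := fun _ _ => rfl
      map_smul' := fun _ _ => by ext; simp [Algebra.smul_def]
      invFun := fun x => ⟨x, IntermediateField.mem_top⟩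
      left_inv := fun _ => rfl
      right_inv := fun _ => rfl }
  rw [htopM.finrank_eq, hrankM]
  norm_num
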